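/- Lower bound direction of the difference-cover reduction: if LCF_k(X,Y) ≥ ℓ, then there exist (U₁,U₂) ∈ Pairs_ℓ(X), (V₁,V₂) ∈ Pairs_ℓ(Y), and nonnegative integers p, q with p + q = k such that LCP_p(U₁,V₁) + LCP_q(U₂,V₂) ≥ LCF_k(X,Y). -/

import Mathlib

/-- Hamming distance between the aligned parts of two lists. -/
def hdistL {α : Type*} [DecidableEq α] (A B : List α) : ℕ :=
  (A.zip B).countP (fun pr => decide (pr.1 ≠ pr.2))

/-- Longest common prefix with at most `d` mismatches. -/
def LCPd {α : Type*} [DecidableEq α] (d : ℕ) (U V : List α) : ℕ :=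
  Nat.findGreatest (fun p => hdistL (U.take p) (V.take p) ≤ d) (min U.length V.length)

/-- `m` is the length of a common factor of `X` and `Y` with at most `k` mismatches. -/
def IsCF {α : Type*} [DecidableEq α] (k : ℕ) (X Y : List α) (m : ℕ) : Prop :=
  ∃ i j : ℕ, i + m ≤ X.length ∧ j + m ≤ Y.length ∧
    hdistL ((X.drop i).take m) ((Y.drop j).take m) ≤ k

/-- `LCF k X Y`: the maximal length of a pair of factors of `X` and `Y` (one of each)
with Hamming distance at most `k`. -/
noncomputable def LCF {α : Type*} [DecidableEq α] (k : ℕ) (X Y : List α) : ℕ :=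
  sSup {m | IsCF k X Y m}

/-- `Pairs_ℓ(S)` built from the (1-indexed) positions of a cover `Cov`:
pairs `((S[1..i−1])^R, S[i..])` for `i ∈ Cov ∩ [1..|S|]`. -/
def PairsOf {α : Type*} (Cov : Set ℕ) (S : List α) : Set (List α × List α) :=
  {pr | ∃ i ∈ Cov, 1 ≤ i ∧ i ≤ S.length ∧ pr = ((S.take (i - 1)).reverse, S.drop (i - 1))}

lemma hdistL_append {α : Type*} [DecidableEq α] {A B C D : List α}
    (h : A.length = C.length) : hdistL (A ++ B) (C ++ D) = hdistL A C + hdistL B D := by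
  unfold hdistL
  rw [List.zip_append h, List.countP_append]

lemma zip_reverse {α : Type*} (A B : List α) (h : A.length = B.length) :
    A.reverse.zip B.reverse = (A.zip B).reverse := by
  induction A generalizing B with
  | nil => simp
  | cons a A ih =>
    cases B with
    | nil => simp at h
    | cons b B =>
      simp only [List.length_cons, Nat.add_right_cancel_iff] at h
      simp only [List.reverse_cons, List.zip_cons_cons]
      rw [List.zip_append (by simp [h]), ih B h]
      simp

lemma hdistL_reverse {α : Type*} [DecidableEq α] (A B : List α)
    (h : A.length = B.length) : hdistL A.reverse B.reverse = hdistL A B := by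
  unfold hdistL
  rw [zip_reverse A B h, List.countP_reverse]

lemma le_LCPd {α : Type*} [DecidableEq α] {d n : ℕ} {U V : List α}
    (h1 : n ≤ min U.length V.length) (h2 : hdistL (U.take n) (V.take n) ≤ d) :
    n ≤ LCPd d U V :=
  Nat.le_findGreatest h1 h2

theorem lcf_le_some_pair_lcp {α : Type*} [DecidableEq α]
    (Cov : Set ℕ) (ℓ : ℕ) (X Y : List α) (k : ℕ)
    (hCov : ∀ i j : ℕ, 0 < i → 0 < j → ∃ h : ℕ, h < ℓ ∧ i + h ∈ Cov ∧ j + h ∈ Cov)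
    (hLCF : ℓ ≤ LCF k X Y) :
    ∃ (U₁ U₂ V₁ V₂ : List α) (p q : ℕ),
      (U₁, U₂) ∈ PairsOf Cov X ∧ (V₁, V₂) ∈ PairsOf Cov Y ∧ p + q = k ∧
      LCF k X Y ≤ LCPd p U₁ V₁ + LCPd q U₂ V₂ := by
  set m := LCF k X Y with hm
  have hmem : IsCF k X Y m := by
    have : sSup {m | IsCF k X Y m} ∈ {m | IsCF k X Y m} := by
      apply Nat.sSup_mem
      · exact ⟨0, 0, 0, by simp, by simp, by simp [hdistL]⟩
      · exact ⟨X.length, fun x ⟨i, j, hi, _, _⟩ => le_trans (Nat.le_add_left x i) hi⟩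
    exact this
  obtain ⟨i, j, hiX, hjY, hdist⟩ := hmem
  obtain ⟨h, hhℓ, hiCov, hjCov⟩ := hCov (i + 1) (j + 1) (Nat.succ_pos i) (Nat.succ_pos j)
  have hhm : h < m := lt_of_lt_of_le hhℓ hLCF
  have hhm' : h ≤ m := le_of_lt hhm
  -- split the common factor at offset h
  have hXsplit : (X.drop i).take m = (X.drop i).take h ++ (X.drop (i + h)).take (m - h) := by
    rw [← List.drop_drop, ← List.take_add, Nat.add_sub_cancel' hhm']
  have hYsplit : (Y.drop j).take m = (Y.drop j).take h ++ (Y.drop (j + h)).take (m - h) := by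
    rw [← List.drop_drop, ← List.take_add, Nat.add_sub_cancel' hhm']
  have hlenXh : ((X.drop i).take h).length = h := by
    simp only [List.length_take, List.length_drop]
    omega
  have hlenYh : ((Y.drop j).take h).length = h := by
    simp only [List.length_take, List.length_drop]
    omega
  rw [hXsplit, hYsplit, hdistL_append (hlenXh.trans hlenYh.symm)] at hdist
  set p := hdistL ((X.drop i).take h) ((Y.drop j).take h) with hp
  set q' := hdistL ((X.drop (i + h)).take (m - h)) ((Y.drop (j + h)).take (m - h)) with hq'
  refine ⟨(X.take (i + h)).reverse, X.drop (i + h), (Y.take (j + h)).reverse, Y.drop (j + h),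
    p, k - p, ?_, ?_, by omega, ?_⟩
  · exact ⟨i + h + 1, (show i + 1 + h = i + h + 1 by omega) ▸ hiCov, by omega, by omega, by
      simp⟩
  · exact ⟨j + h + 1, (show j + 1 + h = j + h + 1 by omega) ▸ hjCov, by omega, by omega, by
      simp⟩
  · -- LCPd bounds
    have hU1 : ((X.take (i + h)).reverse).take h = ((X.drop i).take h).reverse := by
      rw [List.take_add, List.reverse_append, List.take_left' (by simp [hlenXh])]
    have hV1 : ((Y.take (j + h)).reverse).take h = ((Y.drop j).take h).reverse := by
      rw [List.take_add, List.reverse_append, List.take_left' (by simp [hlenYh])]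
    have b1 : h ≤ LCPd p ((X.take (i + h)).reverse) ((Y.take (j + h)).reverse) := by
      apply le_LCPd
      · simp only [le_min_iff, List.length_reverse, List.length_take]
        omega
      · rw [hU1, hV1, hdistL_reverse _ _ (hlenXh.trans hlenYh.symm)]
    have b2 : m - h ≤ LCPd (k - p) (X.drop (i + h)) (Y.drop (j + h)) := by
      apply le_LCPd
      · simp only [le_min_iff, List.length_drop]
        omega
      · omega
    omega
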